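/- arXiv:1402.6095 — 4 statements merged into one kernel-verified Lean document; each statement's English description precedes it below -/
import Mathlib

section
/- Let μ be a Borel probability measure on ℂ with compact support, and define its Newton potential M(ξ) = ∫ 1/|w − ξ| dμ(w). Then for every ζ ∈ ℂ, the limit as r → 0 of (1/(πr²)) ∫_{D(ζ,r)} |w − ζ|·M(w) dL(w) equals μ({ζ}), where L is Lebesgue measure on ℂ and D(ζ,r) is the open disc of center ζ and radius r. -/
open MeasureTheory Filter Metric
open scoped ENNReal Real Topology

lemma aux_vol (c : ℂ) {s : ℝ} (hs : 0 ≤ s) :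
    volume (ball c s) = ENNReal.ofReal (π * s ^ 2) := by
  rw [Complex.volume_ball, ENNReal.ofReal_mul Real.pi_pos.le, ← ENNReal.ofReal_pow hs,
    show ENNReal.ofReal π = (NNReal.pi : ℝ≥0∞) by
      rw [← NNReal.coe_real_pi, ENNReal.ofReal_coe_nnreal]]
  ring

lemma aux_ball (ξ : ℂ) {r : ℝ} (hr : 0 < r) :
    ∫⁻ w in ball ξ r, ENNReal.ofReal (‖w - ξ‖)⁻¹ ∂volume
      ≤ ENNReal.ofReal (4 * π * r) := by
  classical
  set A : ℕ → Set ℂ := fun k => ball ξ (r / 2 ^ k) \ ball ξ (r / 2 ^ (k + 1)) with hA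
  have hcover : ball ξ r ⊆ {ξ} ∪ ⋃ k, A k := by
    intro w hw
    rcases eq_or_ne w ξ with h | h
    · exact Or.inl (by simp [h])
    right
    set d := ‖w - ξ‖ with hd
    have hd0 : 0 < d := by
      simpa [hd, norm_pos_iff, sub_ne_zero] using h
    have hdr : d < r := by
      have := mem_ball.mp hw
      rwa [Complex.dist_eq] at this
    have hex : ∃ n : ℕ, r ≤ d * 2 ^ (n + 1) := by
      obtain ⟨n, hn⟩ := pow_unbounded_of_one_lt (r / d) (one_lt_two (α := ℝ))
      refine ⟨n, ?_⟩
      rw [div_lt_iff₀ hd0] at hn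
      have h2 : (0:ℝ) < 2 ^ n := by positivity
      have : d * 2 ^ (n+1) = 2 * (2 ^ n * d) := by ring
      nlinarith [hn]
    set k := Nat.find hex with hk
    have hks := Nat.find_spec hex
    refine Set.mem_iUnion.mpr ⟨k, ?_, ?_⟩
    · rw [mem_ball, Complex.dist_eq, ← hd, lt_div_iff₀ (by positivity : (0:ℝ) < 2 ^ k)]
      rcases Nat.eq_zero_or_pos k with h0 | h0
      · simpa [h0] using hdr
      · have hmin := Nat.find_min hex (show k - 1 < k from Nat.sub_lt h0 one_pos)
        rw [not_le, Nat.sub_add_cancel h0] at hmin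
        exact hmin
    · simp only [mem_ball, Complex.dist_eq, ← hd, not_lt]
      rw [div_le_iff₀ (by positivity : (0:ℝ) < 2 ^ (k+1))]
      exact hks
  have hAk : ∀ k : ℕ, ∫⁻ w in A k, ENNReal.ofReal (‖w - ξ‖)⁻¹ ∂volume
      ≤ ENNReal.ofReal (2 * π * r * (1 / 2) ^ k) := by
    intro k
    have hmeas : MeasurableSet (A k) := measurableSet_ball.diff measurableSet_ball
    have h2k : (0:ℝ) < 2 ^ (k+1) := by positivity
    calc ∫⁻ w in A k, ENNReal.ofReal (‖w - ξ‖)⁻¹ ∂volume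
        ≤ ∫⁻ _ in A k, ENNReal.ofReal (2 ^ (k+1) / r) ∂volume := by
          refine setLIntegral_mono' hmeas fun w hw => ?_
          apply ENNReal.ofReal_le_ofReal
          have h1 : r / 2 ^ (k+1) ≤ ‖w - ξ‖ := by
            have := hw.2
            simp only [mem_ball, Complex.dist_eq, not_lt] at this
            exact this
          have h2 : (0:ℝ) < r / 2 ^ (k+1) := by positivity
          calc (‖w - ξ‖)⁻¹ ≤ (r / 2 ^ (k+1))⁻¹ := by
                exact inv_anti₀ h2 h1
            _ = 2 ^ (k+1) / r := by rw [inv_div]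
      _ = ENNReal.ofReal (2 ^ (k+1) / r) * volume (A k) := setLIntegral_const _ _
      _ ≤ ENNReal.ofReal (2 ^ (k+1) / r) * volume (ball ξ (r / 2 ^ k)) := by
          gcongr
          exact Set.diff_subset
      _ = ENNReal.ofReal (2 ^ (k+1) / r) * ENNReal.ofReal (π * (r / 2 ^ k) ^ 2) := by
          rw [aux_vol _ (by positivity)]
      _ = ENNReal.ofReal (2 * π * r * (1 / 2) ^ k) := by
          rw [← ENNReal.ofReal_mul (by positivity)]
          congr 1
          have h2k' : (2:ℝ) ^ k ≠ 0 := by positivity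
          rw [one_div, inv_pow]
          field_simp
          ring
  have hsum : ∑' k : ℕ, ENNReal.ofReal (2 * π * r * (1 / 2 : ℝ) ^ k)
      = ENNReal.ofReal (4 * π * r) := by
    rw [← ENNReal.ofReal_tsum_of_nonneg (fun k => by positivity)
      (Summable.mul_left _ (summable_geometric_of_lt_one (by norm_num) (by norm_num)))]
    congr 1
    rw [tsum_mul_left, tsum_geometric_of_lt_one (by norm_num) (by norm_num)]
    norm_num
    ring
  calc ∫⁻ w in ball ξ r, ENNReal.ofReal (‖w - ξ‖)⁻¹ ∂volume
      ≤ ∫⁻ w in {ξ} ∪ ⋃ k, A k, ENNReal.ofReal (‖w - ξ‖)⁻¹ ∂volume :=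
        lintegral_mono_set hcover
    _ ≤ (∫⁻ w in ({ξ} : Set ℂ), ENNReal.ofReal (‖w - ξ‖)⁻¹ ∂volume)
        + ∫⁻ w in ⋃ k, A k, ENNReal.ofReal (‖w - ξ‖)⁻¹ ∂volume :=
        lintegral_union_le _ _ _
    _ ≤ 0 + ∑' k : ℕ, ∫⁻ w in A k, ENNReal.ofReal (‖w - ξ‖)⁻¹ ∂volume := by
        gcongr
        · exact le_of_eq (setLIntegral_measure_zero _ _ (measure_singleton ξ))
        · exact lintegral_iUnion_le _ _
    _ ≤ 0 + ∑' k : ℕ, ENNReal.ofReal (2 * π * r * (1 / 2 : ℝ) ^ k) := by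
        gcongr with k
        exact hAk k
    _ = ENNReal.ofReal (4 * π * r) := by rw [zero_add, hsum]

lemma aux_div {α : Type*} [MeasurableSpace α] (ν : Measure α) {f : α → ℝ≥0∞}
    (hf : AEMeasurable f ν) (c : ℝ≥0∞) :
    ∫⁻ x, f x / c ∂ν = (∫⁻ x, f x ∂ν) / c := by
  simp_rw [div_eq_mul_inv]
  exact lintegral_mul_const'' _ hf

lemma aux_ball2 (c ξ : ℂ) {r : ℝ} (hr : 0 < r) :
    ∫⁻ w in ball c r, ENNReal.ofReal (‖w - ξ‖)⁻¹ ∂volume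
      ≤ ENNReal.ofReal (5 * π * r) := by
  have h1 : ball c r ⊆ (ball c r \ ball ξ r) ∪ ball ξ r := fun w hw => by
    by_cases h : w ∈ ball ξ r
    exacts [Or.inr h, Or.inl ⟨hw, h⟩]
  calc ∫⁻ w in ball c r, ENNReal.ofReal (‖w - ξ‖)⁻¹ ∂volume
      ≤ ∫⁻ w in (ball c r \ ball ξ r) ∪ ball ξ r,
          ENNReal.ofReal (‖w - ξ‖)⁻¹ ∂volume := lintegral_mono_set h1
    _ ≤ (∫⁻ w in ball c r \ ball ξ r, ENNReal.ofReal (‖w - ξ‖)⁻¹ ∂volume)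
        + ∫⁻ w in ball ξ r, ENNReal.ofReal (‖w - ξ‖)⁻¹ ∂volume :=
        lintegral_union_le _ _ _
    _ ≤ ENNReal.ofReal (π * r) + ENNReal.ofReal (4 * π * r) := by
        gcongr
        · calc ∫⁻ w in ball c r \ ball ξ r, ENNReal.ofReal (‖w - ξ‖)⁻¹ ∂volume
              ≤ ∫⁻ _ in ball c r \ ball ξ r, ENNReal.ofReal r⁻¹ ∂volume := by
                refine setLIntegral_mono' (measurableSet_ball.diff measurableSet_ball)
                  fun w hw => ?_
                apply ENNReal.ofReal_le_ofReal
                have h2 : r ≤ ‖w - ξ‖ := by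
                  have := hw.2
                  simp only [mem_ball, Complex.dist_eq, not_lt] at this
                  exact this
                exact inv_anti₀ hr h2
            _ = ENNReal.ofReal r⁻¹ * volume (ball c r \ ball ξ r) := setLIntegral_const _ _
            _ ≤ ENNReal.ofReal r⁻¹ * volume (ball c r) := by
                gcongr
                exact Set.diff_subset
            _ = ENNReal.ofReal r⁻¹ * ENNReal.ofReal (π * r ^ 2) := by rw [aux_vol _ hr.le]
            _ = ENNReal.ofReal (π * r) := by
                rw [← ENNReal.ofReal_mul (by positivity)]
                congr 1
                field_simp
        · exact aux_ball ξ hr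
    _ = ENNReal.ofReal (5 * π * r) := by
        rw [← ENNReal.ofReal_add (by positivity) (by positivity)]
        congr 1
        ring

theorem stmt_5 (μ : Measure ℂ) [IsProbabilityMeasure μ]
    (K : Set ℂ) (hK : IsCompact K) (hsupp : μ Kᶜ = 0)
    (M : ℂ → ℝ≥0∞) (hM : ∀ ξ : ℂ, M ξ = ∫⁻ w, ENNReal.ofReal (1 / ‖w - ξ‖) ∂μ)
    (ζ : ℂ) :
    Tendsto
      (fun r : ℝ =>
        (∫⁻ w in ball ζ r, ENNReal.ofReal (‖w - ζ‖) * M w ∂volume) /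
          ENNReal.ofReal (π * r ^ 2))
      (𝓝[>] 0) (𝓝 (μ {ζ})) := by
  have hFm : Measurable fun p : ℂ × ℂ =>
      ENNReal.ofReal (‖p.1 - ζ‖ / ‖p.1 - p.2‖) := by
    apply ENNReal.measurable_ofReal.comp
    exact ((continuous_norm.comp (continuous_fst.sub continuous_const)).measurable).div
      ((continuous_norm.comp (continuous_fst.sub continuous_snd)).measurable)
  set B : ℝ → ℂ → ℝ≥0∞ := fun r ξ =>
    ∫⁻ w in ball ζ r, ENNReal.ofReal (‖w - ζ‖ / ‖w - ξ‖) ∂volume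
    with hB
  have hBmeas : ∀ r, Measurable fun ξ => B r ξ := fun r => hFm.lintegral_prod_left'
  -- the key uniform bound
  have hkey : ∀ (r : ℝ), 0 < r → ∀ ξ : ℂ, B r ξ ≤ 5 * ENNReal.ofReal (π * r ^ 2) := by
    intro r hr ξ
    calc B r ξ
        ≤ ∫⁻ w in ball ζ r,
            ENNReal.ofReal r * ENNReal.ofReal (‖w - ξ‖)⁻¹ ∂volume := by
          refine setLIntegral_mono' measurableSet_ball fun w hw => ?_
          rw [← ENNReal.ofReal_mul hr.le]
          apply ENNReal.ofReal_le_ofReal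
          rw [div_eq_mul_inv]
          have hwζ : ‖w - ζ‖ ≤ r := by
            have := mem_ball.mp hw
            rw [Complex.dist_eq] at this
            exact this.le
          exact mul_le_mul_of_nonneg_right hwζ (inv_nonneg.2 (norm_nonneg _))
      _ = ENNReal.ofReal r
          * ∫⁻ w in ball ζ r, ENNReal.ofReal (‖w - ξ‖)⁻¹ ∂volume :=
          lintegral_const_mul' _ _ ENNReal.ofReal_ne_top
      _ ≤ ENNReal.ofReal r * ENNReal.ofReal (5 * π * r) := by
          gcongr
          exact aux_ball2 ζ ξ hr
      _ = 5 * ENNReal.ofReal (π * r ^ 2) := by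
          rw [← ENNReal.ofReal_mul hr.le, ← ENNReal.ofReal_ofNat 5,
            ← ENNReal.ofReal_mul (by norm_num)]
          congr 1
          ring
  -- rewriting the expression via Tonelli
  have hEq : ∀ r : ℝ, 0 < r →
      (∫⁻ w in ball ζ r, ENNReal.ofReal (‖w - ζ‖) * M w ∂volume) /
        ENNReal.ofReal (π * r ^ 2)
      = ∫⁻ ξ, B r ξ / ENNReal.ofReal (π * r ^ 2) ∂μ := by
    intro r hr
    have h1 : ∀ w : ℂ, ENNReal.ofReal (‖w - ζ‖) * M w
        = ∫⁻ ξ, ENNReal.ofReal (‖w - ζ‖ / ‖w - ξ‖) ∂μ := by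
      intro w
      rw [hM, ← lintegral_const_mul' _ _ ENNReal.ofReal_ne_top]
      congr 1
      ext ξ
      rw [← ENNReal.ofReal_mul (norm_nonneg _), mul_one_div,
        norm_sub_rev ξ w]
    simp_rw [h1]
    rw [lintegral_lintegral_swap hFm.aemeasurable, ← aux_div μ (hBmeas r).aemeasurable]
  have hev : (fun r : ℝ => ∫⁻ ξ, B r ξ / ENNReal.ofReal (π * r ^ 2) ∂μ)
      =ᶠ[𝓝[>] (0:ℝ)]
      (fun r : ℝ =>
        (∫⁻ w in ball ζ r, ENNReal.ofReal (‖w - ζ‖) * M w ∂volume) /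
          ENNReal.ofReal (π * r ^ 2)) := by
    filter_upwards [self_mem_nhdsWithin] with r hr
    exact (hEq r hr).symm
  rw [show μ {ζ} = ∫⁻ ξ, Set.indicator {ζ} (fun _ => (1:ℝ≥0∞)) ξ ∂μ from
    (lintegral_indicator_one (measurableSet_singleton ζ)).symm]
  refine Tendsto.congr' hev ?_
  apply tendsto_lintegral_filter_of_dominated_convergence (fun _ => (5:ℝ≥0∞))
  · exact Eventually.of_forall fun r => (hBmeas r).div_const _
  · filter_upwards [self_mem_nhdsWithin] with r hr
    refine ae_of_all _ fun ξ => ?_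
    exact ENNReal.div_le_of_le_mul (hkey r hr ξ)
  · rw [lintegral_const, measure_univ, mul_one]
    exact ENNReal.ofNat_ne_top
  · refine ae_of_all _ fun ξ => ?_
    by_cases hξ : ξ = ζ
    · subst hξ
      rw [Set.indicator_of_mem (Set.mem_singleton ξ)]
      have hone : ∀ r : ℝ, 0 < r → B r ξ / ENNReal.ofReal (π * r ^ 2) = 1 := by
        intro r hr
        have hae : ∀ᵐ w ∂(volume.restrict (ball ξ r)),
            ENNReal.ofReal (‖w - ξ‖ / ‖w - ξ‖) = 1 := by
          apply ae_restrict_of_ae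
          have h0 : ∀ᵐ w : ℂ ∂volume, w ≠ ξ := by
            rw [ae_iff]
            have : {w : ℂ | ¬ w ≠ ξ} = {ξ} := by ext w; simp
            rw [this]
            exact measure_singleton ξ
          filter_upwards [h0] with w hw
          rw [div_self (by simpa [sub_eq_zero] using hw), ENNReal.ofReal_one]
        rw [hB]
        simp only []
        rw [lintegral_congr_ae hae, lintegral_one, Measure.restrict_apply_univ,
          aux_vol ξ hr.le]
        exact ENNReal.div_self (ENNReal.ofReal_pos.mpr (by positivity)).ne'
          ENNReal.ofReal_ne_top
      apply Tendsto.congr' ?_ (tendsto_const_nhds (x := (1:ℝ≥0∞)))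
      filter_upwards [self_mem_nhdsWithin] with r hr
      exact (hone r hr).symm
    · rw [Set.indicator_of_notMem (by simpa using hξ)]
      set d := ‖ξ - ζ‖ with hd
      have hd0 : 0 < d := by
        rw [hd]
        simpa [norm_pos_iff, sub_ne_zero] using hξ
      have htend : Tendsto (fun r : ℝ => ENNReal.ofReal (2 * r / d)) (𝓝[>] 0) (𝓝 0) := by
        have h1 : Tendsto (fun r : ℝ => 2 * r / d) (𝓝[>] 0) (𝓝 0) := by
          have hc : Continuous fun r : ℝ => 2 * r / d := by continuity
          have := hc.tendsto 0
          simp only [mul_zero, zero_div] at this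
          exact this.mono_left nhdsWithin_le_nhds
        have := (ENNReal.continuous_ofReal.tendsto 0).comp h1
        rw [ENNReal.ofReal_zero] at this
        exact this
      refine tendsto_of_tendsto_of_tendsto_of_le_of_le' tendsto_const_nhds htend
        (Eventually.of_forall fun r => zero_le') ?_
      filter_upwards [Ioo_mem_nhdsGT_of_mem ⟨le_refl (0:ℝ), half_pos hd0⟩] with r hr
      apply ENNReal.div_le_of_le_mul
      calc B r ξ
          ≤ ∫⁻ _ in ball ζ r, ENNReal.ofReal (2 * r / d) ∂volume := by
            refine setLIntegral_mono' measurableSet_ball fun w hw => ?_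
            apply ENNReal.ofReal_le_ofReal
            have hwζ : ‖w - ζ‖ < r := by
              have := mem_ball.mp hw; rwa [Complex.dist_eq] at this
            have hwξ : d / 2 ≤ ‖w - ξ‖ := by
              have htri : d ≤ ‖w - ξ‖ + ‖w - ζ‖ := by
                calc d = ‖(ξ - w) + (w - ζ)‖ := by
                      rw [hd]; congr 1; ring
                  _ ≤ ‖ξ - w‖ + ‖w - ζ‖ := norm_add_le _ _
                  _ = ‖w - ξ‖ + ‖w - ζ‖ := by
                      rw [norm_sub_rev]
              have := hr.2
              linarith
            calc ‖w - ζ‖ / ‖w - ξ‖ ≤ r / (d / 2) :=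
                div_le_div₀ hr.1.le hwζ.le (half_pos hd0) hwξ
              _ = 2 * r / d := by field_simp
        _ = ENNReal.ofReal (2 * r / d) * volume (ball ζ r) := setLIntegral_const _ _
        _ = ENNReal.ofReal (2 * r / d) * ENNReal.ofReal (π * r ^ 2) := by
            rw [aux_vol _ hr.1.le]
end

section
/- Let μ be a Borel probability measure on ℂ with compact support and Newton potential M(ξ) = ∫ 1/|w − ξ| dμ(w). If μ({ζ}) = 0, then for every ε > 0 the set Π(ε) = {w ∈ ℂ : |w − ζ|·M(w) > ε} satisfies lim_{r→0} L(Π(ε) ∩ D(ζ,r))/(πr²) = 0. -/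
open MeasureTheory Filter Metric
open scoped ENNReal Real Topology

lemma key1 (a : ℂ) (r : ℝ) (hr : 0 < r) :
    ∫⁻ w in ball a r, ENNReal.ofReal (1 / ‖a - w‖) ≤
      4 * (NNReal.pi : ℝ≥0∞) * ENNReal.ofReal r := by
  set f : ℂ → ℝ≥0∞ := fun w => ENNReal.ofReal (1 / ‖a - w‖) with hf
  set A : ℕ → Set ℂ := fun n => ball a (r / 2 ^ n) \ ball a (r / 2 ^ (n + 1)) with hA
  have hsub : ball a r ⊆ {a} ∪ ⋃ n, A n := by
    intro w hw
    rcases eq_or_ne w a with h | h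
    · exact Or.inl h
    · right
      have hd : 0 < dist w a := dist_pos.mpr h
      have hP : ∃ n : ℕ, r / 2 ^ (n + 1) ≤ dist w a := by
        obtain ⟨n, hn⟩ := exists_pow_lt_of_lt_one (div_pos hd hr) (by norm_num : (1:ℝ)/2 < 1)
        refine ⟨n + 1, ?_⟩
        have : r * (1/2) ^ (n+1+1) < r * (dist w a / r) := by
          apply mul_lt_mul_of_pos_left _ hr
          calc ((1:ℝ)/2) ^ (n+1+1) ≤ (1/2)^n := by
                apply pow_le_pow_of_le_one (by norm_num) (by norm_num); omega
            _ < _ := hn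
        rw [mul_div_cancel₀ _ hr.ne'] at this
        have h2 : r * (1/2) ^ (n+1+1) = r / 2 ^ (n+1+1) := by
          rw [div_pow]; ring
        linarith [this, h2.symm.le]
      set n := Nat.find hP with hn
      have h1 : r / 2 ^ (n + 1) ≤ dist w a := Nat.find_spec hP
      have h2 : dist w a < r / 2 ^ n := by
        rcases Nat.eq_zero_or_pos n with h0 | h0
        · rw [h0]; simpa using mem_ball.mp hw
        · have hmin := Nat.find_min hP (Nat.pred_lt h0.ne')
          push_neg at hmin
          have hpn : n.pred + 1 = n := Nat.succ_pred_eq_of_pos h0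
          rw [← hpn]
          exact hmin
      exact Set.mem_iUnion.mpr ⟨n, mem_ball.mpr h2, fun hc => absurd (mem_ball.mp hc) (not_lt.mpr h1)⟩
  calc ∫⁻ w in ball a r, f w ≤ ∫⁻ w in {a} ∪ ⋃ n, A n, f w :=
        lintegral_mono_set hsub
    _ ≤ (∫⁻ w in {a}, f w) + ∫⁻ w in ⋃ n, A n, f w := lintegral_union_le _ _ _
    _ ≤ 0 + ∑' n, ∫⁻ w in A n, f w := by
        gcongr
        · rw [lintegral_singleton]; simp [hf]
        · exact lintegral_iUnion_le _ _
    _ ≤ ∑' n : ℕ, ENNReal.ofReal (2 * r) * 2⁻¹ ^ n * NNReal.pi := by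
        rw [zero_add]
        gcongr with n
        have hstep : ∫⁻ w in A n, f w ≤
            ENNReal.ofReal (2 ^ (n+1) / r) * volume (A n) := by
          rw [← setLIntegral_const]
          apply setLIntegral_mono' (measurableSet_ball.diff measurableSet_ball)
          intro w hw
          apply ENNReal.ofReal_le_ofReal
          rw [one_div]
          apply inv_le_of_inv_le₀ (by positivity)
          have : r / 2 ^ (n+1) ≤ dist w a := not_lt.mp (fun hc => hw.2 (mem_ball.mpr hc))
          calc (2 ^ (n+1) / r : ℝ)⁻¹ = r / 2 ^ (n+1) := by field_simp
            _ ≤ dist w a := this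
            _ = ‖a - w‖ := by rw [Complex.dist_eq, norm_sub_rev]
        have hvol : volume (A n) ≤ ENNReal.ofReal (r / 2 ^ n) ^ 2 * NNReal.pi := by
          calc volume (A n) ≤ volume (ball a (r / 2 ^ n)) := measure_mono Set.diff_subset
            _ = _ := Complex.volume_ball _ _
        calc ∫⁻ w in A n, f w ≤ ENNReal.ofReal (2 ^ (n+1) / r) *
              (ENNReal.ofReal (r / 2 ^ n) ^ 2 * NNReal.pi) := by
              exact hstep.trans (by gcongr)
          _ = ENNReal.ofReal ((2 ^ (n+1) / r) * (r / 2 ^ n)^2) * NNReal.pi := by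
              rw [← ENNReal.ofReal_pow (by positivity), ← mul_assoc,
                ← ENNReal.ofReal_mul (by positivity)]
          _ = ENNReal.ofReal (2 * r * (1/2)^n) * NNReal.pi := by
              congr 2
              rw [one_div_pow]
              field_simp
              ring
          _ = ENNReal.ofReal (2 * r) * 2⁻¹ ^ n * NNReal.pi := by
              have hhalf : ENNReal.ofReal (1/2 : ℝ) = 2⁻¹ := by
                rw [one_div, ENNReal.ofReal_inv_of_pos (by norm_num)]
                norm_num
              rw [ENNReal.ofReal_mul (by positivity), ENNReal.ofReal_pow (by norm_num), hhalf]
    _ = 4 * (NNReal.pi : ℝ≥0∞) * ENNReal.ofReal r := by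
        rw [ENNReal.tsum_mul_right, ENNReal.tsum_mul_left, ENNReal.tsum_geometric]
        rw [ENNReal.one_sub_inv_two, inv_inv]
        rw [ENNReal.ofReal_mul (by norm_num : (0:ℝ) ≤ 2), ENNReal.ofReal_ofNat]
        ring

lemma key2 (ζ a : ℂ) (r : ℝ) (hr : 0 < r) :
    ∫⁻ w in ball ζ r, ENNReal.ofReal (1 / ‖a - w‖) ≤
      5 * (NNReal.pi : ℝ≥0∞) * ENNReal.ofReal r := by
  have hsub : ball ζ r ⊆ (ball ζ r \ ball a r) ∪ ball a r := by
    intro w hw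
    by_cases h : w ∈ ball a r
    · exact Or.inr h
    · exact Or.inl ⟨hw, h⟩
  calc ∫⁻ w in ball ζ r, ENNReal.ofReal (1 / ‖a - w‖)
      ≤ ∫⁻ w in (ball ζ r \ ball a r) ∪ ball a r,
          ENNReal.ofReal (1 / ‖a - w‖) := lintegral_mono_set hsub
    _ ≤ (∫⁻ w in ball ζ r \ ball a r, ENNReal.ofReal (1 / ‖a - w‖))
        + ∫⁻ w in ball a r, ENNReal.ofReal (1 / ‖a - w‖) := lintegral_union_le _ _ _
    _ ≤ (NNReal.pi : ℝ≥0∞) * ENNReal.ofReal r + 4 * (NNReal.pi : ℝ≥0∞) * ENNReal.ofReal r := by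
        gcongr
        · calc ∫⁻ w in ball ζ r \ ball a r, ENNReal.ofReal (1 / ‖a - w‖)
              ≤ ∫⁻ _ in ball ζ r \ ball a r, ENNReal.ofReal (1 / r) := by
                apply setLIntegral_mono' (measurableSet_ball.diff measurableSet_ball)
                intro w hw
                apply ENNReal.ofReal_le_ofReal
                apply one_div_le_one_div_of_le hr
                have : r ≤ dist w a := not_lt.mp (fun hc => hw.2 (mem_ball.mpr hc))
                calc r ≤ dist w a := this
                  _ = ‖a - w‖ := by rw [Complex.dist_eq, norm_sub_rev]
            _ = ENNReal.ofReal (1 / r) * volume (ball ζ r \ ball a r) := setLIntegral_const _ _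
            _ ≤ ENNReal.ofReal (1 / r) * (ENNReal.ofReal r ^ 2 * NNReal.pi) := by
                gcongr
                calc volume (ball ζ r \ ball a r) ≤ volume (ball ζ r) :=
                      measure_mono Set.diff_subset
                  _ = _ := Complex.volume_ball _ _
            _ = (NNReal.pi : ℝ≥0∞) * ENNReal.ofReal r := by
                rw [← ENNReal.ofReal_pow hr.le, ← mul_assoc,
                  ← ENNReal.ofReal_mul (by positivity)]
                rw [show (1/r) * r^2 = r by field_simp]
                ring
        · exact key1 a r hr
    _ = 5 * (NNReal.pi : ℝ≥0∞) * ENNReal.ofReal r := by ring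

lemma key3 (ζ a : ℂ) (δ r : ℝ) (hδ : 0 < δ) (hr : 0 < r) (hrδ : r ≤ δ / 2)
    (ha : δ ≤ dist a ζ) :
    ∫⁻ w in ball ζ r, ENNReal.ofReal (1 / ‖a - w‖) ≤
      ENNReal.ofReal (2 / δ) * (ENNReal.ofReal r ^ 2 * NNReal.pi) := by
  calc ∫⁻ w in ball ζ r, ENNReal.ofReal (1 / ‖a - w‖)
      ≤ ∫⁻ _ in ball ζ r, ENNReal.ofReal (2 / δ) := by
        apply setLIntegral_mono' measurableSet_ball
        intro w hw
        apply ENNReal.ofReal_le_ofReal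
        have h1 : δ / 2 ≤ dist a w := by
          have h2 : dist w ζ < r := mem_ball.mp hw
          have := dist_triangle a w ζ
          have h3 : dist w ζ = dist ζ w := dist_comm _ _
          calc δ / 2 = δ - δ / 2 := by ring
            _ ≤ dist a ζ - r := by linarith
            _ ≤ dist a w := by
                have := dist_triangle a w ζ
                linarith [dist_comm w ζ ▸ h2]
        have habs : ‖a - w‖ = dist a w := (Complex.dist_eq a w).symm
        rw [habs]
        have hpos : 0 < dist a w := lt_of_lt_of_le (by linarith) h1
        rw [div_le_div_iff₀ hpos hδ]
        linarith
    _ = ENNReal.ofReal (2 / δ) * volume (ball ζ r) := setLIntegral_const _ _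
    _ = ENNReal.ofReal (2 / δ) * (ENNReal.ofReal r ^ 2 * NNReal.pi) := by
        rw [Complex.volume_ball]

theorem stmt_6 (μ : Measure ℂ) [IsProbabilityMeasure μ]
    (K : Set ℂ) (hK : IsCompact K) (hsupp : μ Kᶜ = 0)
    (M : ℂ → ℝ≥0∞) (hM : ∀ ξ : ℂ, M ξ = ∫⁻ w, ENNReal.ofReal (1 / ‖w - ξ‖) ∂μ)
    (ζ : ℂ) (hζ : μ {ζ} = 0) (ε : ℝ) (hε : 0 < ε) :
    Tendsto
      (fun r : ℝ =>
        volume ({w : ℂ | ENNReal.ofReal ε < ENNReal.ofReal (‖w - ζ‖) * M w}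
            ∩ ball ζ r) / ENNReal.ofReal (π * r ^ 2))
      (𝓝[>] 0) (𝓝 0) := by
  set Pi : Set ℂ := {w : ℂ | ENNReal.ofReal ε < ENNReal.ofReal (‖w - ζ‖) * M w}
    with hPi
  set f : ℂ → ℝ≥0∞ := fun w => ENNReal.ofReal (‖w - ζ‖) * M w with hfdef
  set c : ℝ≥0∞ := (ENNReal.ofReal ε)⁻¹ with hc
  have hε0 : ENNReal.ofReal ε ≠ 0 := (ENNReal.ofReal_pos.mpr hε).ne'
  have hcT : c ≠ ⊤ := by
    simp [hc, ENNReal.inv_ne_top, hε0]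
  -- measurability
  have hG : Measurable fun p : ℂ × ℂ => ENNReal.ofReal (1 / ‖p.2 - p.1‖) := by
    apply ENNReal.measurable_ofReal.comp
    exact Measurable.div measurable_const
      (continuous_norm.measurable.comp (measurable_snd.sub measurable_fst))
  have hMmeas : Measurable M := by
    have hMe : M = fun ξ => ∫⁻ w,
        (fun p : ℂ × ℂ => ENNReal.ofReal (1 / ‖p.2 - p.1‖)) (ξ, w) ∂μ := by
      funext ξ; exact hM ξ
    rw [hMe]
    exact Measurable.lintegral_prod_right' hG
  have hfmeas : Measurable f := by
    apply Measurable.mul _ hMmeas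
    exact ENNReal.measurable_ofReal.comp
      (continuous_norm.measurable.comp (measurable_id.sub_const ζ))
  have hFmeas : Measurable fun p : ℂ × ℂ =>
      ENNReal.ofReal (‖p.1 - ζ‖) * ENNReal.ofReal (1 / ‖p.2 - p.1‖) := by
    apply Measurable.mul _ hG
    exact ENNReal.measurable_ofReal.comp
      (continuous_norm.measurable.comp (measurable_fst.sub_const ζ))
  -- the main per-radius estimate
  have hmain : ∀ δ : ℝ, 0 < δ → ∀ r : ℝ, 0 < r → r ≤ δ / 2 →
      volume (Pi ∩ ball ζ r) / ENNReal.ofReal (π * r ^ 2) ≤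
        c * 5 * μ (closedBall ζ δ) + c * ENNReal.ofReal (2 / δ) * ENNReal.ofReal r := by
    intro δ hδ r hr hrδ
    have hden : ENNReal.ofReal (π * r ^ 2) = (NNReal.pi : ℝ≥0∞) * ENNReal.ofReal r ^ 2 := by
      rw [ENNReal.ofReal_mul Real.pi_pos.le, ENNReal.ofReal_pow hr.le, ← NNReal.coe_real_pi,
        ENNReal.ofReal_coe_nnreal]
    have hden0 : ENNReal.ofReal (π * r ^ 2) ≠ 0 :=
      (ENNReal.ofReal_pos.mpr (by positivity)).ne'
    have hdenT : ENNReal.ofReal (π * r ^ 2) ≠ ⊤ := ENNReal.ofReal_ne_top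
    rw [ENNReal.div_le_iff_le_mul (Or.inl hden0) (Or.inl hdenT)]
    -- Chebyshev
    have hcheb : ENNReal.ofReal ε * volume (Pi ∩ ball ζ r) ≤ ∫⁻ w in ball ζ r, f w := by
      have h1 : volume (Pi ∩ ball ζ r) = (volume.restrict (ball ζ r)) Pi :=
        (Measure.restrict_apply' measurableSet_ball).symm
      rw [h1]
      calc ENNReal.ofReal ε * (volume.restrict (ball ζ r)) Pi
          ≤ ENNReal.ofReal ε *
            (volume.restrict (ball ζ r)) {w | ENNReal.ofReal ε ≤ f w} := by
            have hsub : Pi ⊆ {w | ENNReal.ofReal ε ≤ f w} := by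
              intro w hw
              simp only [hPi, Set.mem_setOf_eq] at hw ⊢
              exact hw.le
            exact mul_le_mul_right (measure_mono hsub) _
        _ ≤ ∫⁻ w, f w ∂(volume.restrict (ball ζ r)) :=
            mul_meas_ge_le_lintegral₀ hfmeas.aemeasurable _
    -- Tonelli
    have hT2 : ∫⁻ w in ball ζ r, f w = ∫⁻ a, (∫⁻ w in ball ζ r,
        ENNReal.ofReal (‖w - ζ‖) * ENNReal.ofReal (1 / ‖a - w‖)) ∂μ := by
      calc ∫⁻ w in ball ζ r, f w
          = ∫⁻ w in ball ζ r, ∫⁻ a, ENNReal.ofReal (‖w - ζ‖) *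
              ENNReal.ofReal (1 / ‖a - w‖) ∂μ := by
            apply lintegral_congr
            intro w
            rw [hfdef]
            simp only []
            rw [hM w, ← lintegral_const_mul' _ _ ENNReal.ofReal_ne_top]
        _ = _ := lintegral_lintegral_swap hFmeas.aemeasurable
    -- inner bound
    have hI : ∀ a : ℂ, (∫⁻ w in ball ζ r,
        ENNReal.ofReal (‖w - ζ‖) * ENNReal.ofReal (1 / ‖a - w‖)) ≤
        ENNReal.ofReal r * ∫⁻ w in ball ζ r, ENNReal.ofReal (1 / ‖a - w‖) := by
      intro a
      rw [← lintegral_const_mul' _ _ ENNReal.ofReal_ne_top]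
      apply setLIntegral_mono' measurableSet_ball
      intro w hw
      gcongr
      rw [← Complex.dist_eq]
      exact (mem_ball.mp hw).le
    -- split the outer integral
    set S : ℝ≥0∞ := ENNReal.ofReal r * (5 * (NNReal.pi : ℝ≥0∞) * ENNReal.ofReal r) *
        μ (closedBall ζ δ) +
        ENNReal.ofReal r * (ENNReal.ofReal (2 / δ) * (ENNReal.ofReal r ^ 2 * NNReal.pi)) with hS
    have hsplit : (∫⁻ a, (∫⁻ w in ball ζ r,
        ENNReal.ofReal (‖w - ζ‖) * ENNReal.ofReal (1 / ‖a - w‖)) ∂μ) ≤ S := by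
      rw [← lintegral_add_compl _ (measurableSet_closedBall (x := ζ) (ε := δ)), hS]
      have hb1 : ∫⁻ a in closedBall ζ δ, (∫⁻ w in ball ζ r,
          ENNReal.ofReal (‖w - ζ‖) * ENNReal.ofReal (1 / ‖a - w‖)) ∂μ ≤
          ENNReal.ofReal r * (5 * (NNReal.pi : ℝ≥0∞) * ENNReal.ofReal r) * μ (closedBall ζ δ) := by
        calc ∫⁻ a in closedBall ζ δ, (∫⁻ w in ball ζ r,
            ENNReal.ofReal (‖w - ζ‖) * ENNReal.ofReal (1 / ‖a - w‖)) ∂μ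
            ≤ ∫⁻ _ in closedBall ζ δ,
              ENNReal.ofReal r * (5 * (NNReal.pi : ℝ≥0∞) * ENNReal.ofReal r) ∂μ :=
              setLIntegral_mono' measurableSet_closedBall (fun a _ =>
                (hI a).trans (mul_le_mul_right (key2 ζ a r hr) _))
          _ = _ := setLIntegral_const _ _
      have hb2 : ∫⁻ a in (closedBall ζ δ)ᶜ, (∫⁻ w in ball ζ r,
          ENNReal.ofReal (‖w - ζ‖) * ENNReal.ofReal (1 / ‖a - w‖)) ∂μ ≤
          ENNReal.ofReal r * (ENNReal.ofReal (2 / δ) * (ENNReal.ofReal r ^ 2 * NNReal.pi)) := by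
        calc ∫⁻ a in (closedBall ζ δ)ᶜ, (∫⁻ w in ball ζ r,
            ENNReal.ofReal (‖w - ζ‖) * ENNReal.ofReal (1 / ‖a - w‖)) ∂μ
            ≤ ∫⁻ _ in (closedBall ζ δ)ᶜ, ENNReal.ofReal r *
              (ENNReal.ofReal (2 / δ) * (ENNReal.ofReal r ^ 2 * NNReal.pi)) ∂μ := by
              apply setLIntegral_mono' measurableSet_closedBall.compl
              intro a ha
              refine (hI a).trans (mul_le_mul_right ?_ _)
              apply key3 ζ a δ r hδ hr hrδ
              have h4 : ¬ dist a ζ ≤ δ := fun h => ha (mem_closedBall.mpr h)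
              linarith [not_le.mp h4]
          _ = ENNReal.ofReal r * (ENNReal.ofReal (2 / δ) * (ENNReal.ofReal r ^ 2 * NNReal.pi)) *
              μ (closedBall ζ δ)ᶜ := setLIntegral_const _ _
          _ ≤ ENNReal.ofReal r * (ENNReal.ofReal (2 / δ) *
              (ENNReal.ofReal r ^ 2 * NNReal.pi)) * 1 :=
              mul_le_mul_right prob_le_one _
          _ = _ := mul_one _
      exact add_le_add hb1 hb2
    -- combine
    have hvol : volume (Pi ∩ ball ζ r) ≤ c * S := by
      calc volume (Pi ∩ ball ζ r)
          = c * (ENNReal.ofReal ε * volume (Pi ∩ ball ζ r)) := by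
            rw [← mul_assoc, hc, ENNReal.inv_mul_cancel hε0 ENNReal.ofReal_ne_top, one_mul]
        _ ≤ c * S := mul_le_mul_right (hcheb.trans (hT2 ▸ hsplit)) _
    refine hvol.trans (le_of_eq ?_)
    rw [hden, hS]
    ring
  -- now the limit argument
  rw [ENNReal.tendsto_nhds_zero]
  intro η hη
  have hten : Tendsto (fun δ : ℝ => c * 5 * μ (closedBall ζ δ)) (𝓝[>] 0) (𝓝 0) := by
    have h1 : Tendsto (fun δ : ℝ => μ (cthickening δ {ζ})) (𝓝 0) (𝓝 (μ {ζ})) :=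
      tendsto_measure_cthickening_of_isCompact isCompact_singleton
    rw [hζ] at h1
    have h2 : Tendsto (fun δ : ℝ => μ (closedBall ζ δ)) (𝓝[>] 0) (𝓝 0) := by
      apply Tendsto.congr' _ (h1.mono_left nhdsWithin_le_nhds)
      filter_upwards [self_mem_nhdsWithin] with δ (hδ : (0:ℝ) < δ)
      rw [cthickening_singleton _ hδ.le]
    have h3 := ENNReal.Tendsto.const_mul (a := c * 5) h2
      (Or.inr (by simp [ENNReal.mul_ne_top, hcT]))
    simpa using h3
  have hη2 : (0:ℝ≥0∞) < η / 2 := ENNReal.half_pos hη.ne'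
  obtain ⟨δ, hδ2, hδpos⟩ :=
    ((hten.eventually_le_const hη2 |>.and self_mem_nhdsWithin).exists :
      ∃ δ : ℝ, c * 5 * μ (closedBall ζ δ) ≤ η / 2 ∧ δ ∈ Set.Ioi (0:ℝ))
  have hrten : Tendsto (fun r : ℝ => c * ENNReal.ofReal (2 / δ) * ENNReal.ofReal r)
      (𝓝[>] 0) (𝓝 0) := by
    have h4 : Tendsto (fun r : ℝ => ENNReal.ofReal r) (𝓝[>] 0) (𝓝 0) := by
      have := (ENNReal.continuous_ofReal.tendsto 0).mono_left (nhdsWithin_le_nhds (s := Set.Ioi (0:ℝ)))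
      simpa using this
    have h5 := ENNReal.Tendsto.const_mul (a := c * ENNReal.ofReal (2 / δ)) h4
      (Or.inr (ENNReal.mul_ne_top hcT ENNReal.ofReal_ne_top))
    simpa using h5
  filter_upwards [hrten.eventually_le_const hη2,
    Ioc_mem_nhdsGT_of_mem ⟨le_refl (0:ℝ), half_pos hδpos⟩] with r hr1 hr2
  calc volume (Pi ∩ ball ζ r) / ENNReal.ofReal (π * r ^ 2)
      ≤ c * 5 * μ (closedBall ζ δ) + c * ENNReal.ofReal (2 / δ) * ENNReal.ofReal r :=
        hmain δ hδpos r hr2.1 hr2.2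
    _ ≤ η / 2 + η / 2 := add_le_add hδ2 hr1
    _ = η := ENNReal.add_halves η
end

section
/- Let D ⊆ ℂ be a domain, ζ ∈ ∂D a boundary point which is not a peak point for A(closure(D)), so that lim_{r→0} L(D(ζ,r) ∩ D)/(πr²) = 1. Let μ be a Borel measure with compact support in D ∪ {ζ} and μ({ζ}) = 0, with Newton potential M and exceptional sets Π(ε) = {w : |w − ζ|·M(w) > ε}. Then for every ε > 0, lim_{r→0} L(D ∩ D(ζ,r) \ Π(ε))/(πr²) = 1. In particular, there exists a sequence η_ν ∈ D with η_ν → ζ and |ζ − η_ν|·M(η_ν) ≤ 2^{−ν}. -/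
open MeasureTheory Filter Metric Set
open scoped ENNReal Real Topology

lemma vol_ball_C (a : ℂ) (s : ℝ) (hs : 0 ≤ s) :
    volume (ball a s) = ENNReal.ofReal (π * s ^ 2) := by
  rw [Complex.volume_ball, ENNReal.ofReal_mul Real.pi_pos.le, ENNReal.ofReal_pow hs, mul_comm]
  congr 1
  simp [ENNReal.ofReal, Real.toNNReal_of_nonneg Real.pi_pos.le]
  rfl

lemma meas_f (ξ : ℂ) : Measurable fun w : ℂ => ENNReal.ofReal (1 / ‖w - ξ‖) := by
  have h : Continuous fun w : ℂ => ‖w - ξ‖ :=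
    continuous_norm.comp (continuous_sub_right ξ)
  exact ENNReal.measurable_ofReal.comp (measurable_const.div h.measurable)

lemma ball_pot_bound (ξ c : ℂ) (r : ℝ) (hr : 0 < r) :
    ∫⁻ w in ball c r, ENNReal.ofReal (1 / ‖w - ξ‖) ∂volume
      ≤ ENNReal.ofReal (5 * π * r) := by
  set f : ℂ → ℝ≥0∞ := fun w => ENNReal.ofReal (1 / ‖w - ξ‖) with hf
  set A : ℕ → Set ℂ := fun n => ball ξ ((1/2) ^ n * r) \ ball ξ ((1/2) ^ (n+1) * r) with hA
  -- pointwise facts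
  have habs : ∀ w : ℂ, ‖w - ξ‖ = dist w ξ := fun w => (Complex.dist_eq w ξ).symm
  have houter : ∫⁻ w in ball c r \ ball ξ r, f w ∂volume ≤ ENNReal.ofReal (π * r) := by
    have h1 : ∫⁻ w in ball c r \ ball ξ r, f w ∂volume
        ≤ ∫⁻ _ in ball c r \ ball ξ r, ENNReal.ofReal (1 / r) ∂volume := by
      refine setLIntegral_mono' (measurableSet_ball.diff measurableSet_ball) fun w hw => ?_
      refine ENNReal.ofReal_le_ofReal ?_
      rw [habs]
      have : r ≤ dist w ξ := by simpa [dist_comm] using hw.2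
      exact one_div_le_one_div_of_le hr this
    refine h1.trans ?_
    rw [setLIntegral_const]
    calc ENNReal.ofReal (1/r) * volume (ball c r \ ball ξ r)
        ≤ ENNReal.ofReal (1/r) * volume (ball c r) :=
          mul_le_mul_right (measure_mono diff_subset) _
      _ = ENNReal.ofReal (1/r) * ENNReal.ofReal (π * r ^ 2) := by rw [vol_ball_C c r hr.le]
      _ = ENNReal.ofReal ((1/r) * (π * r ^ 2)) := (ENNReal.ofReal_mul (by positivity)).symm
      _ = ENNReal.ofReal (π * r) := by congr 1; field_simp
  have hannuli : ∫⁻ w in ball ξ r \ {ξ}, f w ∂volume ≤ ENNReal.ofReal (4 * π * r) := by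
    have hsub : ball ξ r \ {ξ} ⊆ ⋃ n, A n := by
      intro w hw
      have hd0 : 0 < dist w ξ := by
        simp only [mem_diff, mem_singleton_iff] at hw
        exact dist_pos.2 hw.2
      have hdr : dist w ξ < r := mem_ball.1 hw.1
      have hex : ∃ n : ℕ, (1/2 : ℝ) ^ (n+1) * r ≤ dist w ξ := by
        obtain ⟨n, hn⟩ := exists_pow_lt_of_lt_one (div_pos hd0 hr) (by norm_num : (1/2:ℝ) < 1)
        have h2 : (1/2:ℝ) ^ (n+1) ≤ (1/2) ^ n :=
          pow_le_pow_of_le_one (by norm_num) (by norm_num) (Nat.le_succ n)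
        have h3 : (1/2:ℝ)^n * r < dist w ξ := by
          nlinarith [mul_lt_mul_of_pos_right hn hr, div_mul_cancel₀ (dist w ξ) hr.ne']
        exact ⟨n, by nlinarith⟩
      classical
      let m := Nat.find hex
      have hm1 : (1/2:ℝ)^(m+1) * r ≤ dist w ξ := Nat.find_spec hex
      have hm2 : dist w ξ < (1/2:ℝ)^m * r := by
        rcases Nat.eq_zero_or_pos m with h0 | hpos
        · rw [h0]; simpa using hdr
        · obtain ⟨k, hk⟩ := Nat.exists_eq_succ_of_ne_zero hpos.ne'
          have := Nat.find_min hex (m := k) (by omega)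
          rw [hk]; push_neg at this; exact this
      exact mem_iUnion.2 ⟨m, ⟨mem_ball.2 hm2, by simp only [mem_ball, not_lt]; exact hm1⟩⟩
    refine (lintegral_mono_set hsub).trans ((lintegral_iUnion_le _ _).trans ?_)
    have hAn : ∀ n : ℕ, ∫⁻ w in A n, f w ∂volume ≤ ENNReal.ofReal (2 * π * r * (1/2)^n) := by
      intro n
      have hq : (0:ℝ) < (1/2)^n := by positivity
      have h1 : ∫⁻ w in A n, f w ∂volume
          ≤ ∫⁻ _ in A n, ENNReal.ofReal (((1/2:ℝ)^(n+1) * r)⁻¹) ∂volume := by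
        refine setLIntegral_mono' (measurableSet_ball.diff measurableSet_ball) fun w hw => ?_
        refine ENNReal.ofReal_le_ofReal ?_
        rw [habs, one_div]
        have hwd : (1/2:ℝ)^(n+1) * r ≤ dist w ξ := by
          have := hw.2; simp only [mem_ball, not_lt] at this; exact this
        exact inv_anti₀ (by positivity) hwd
      refine h1.trans ?_
      rw [setLIntegral_const]
      calc ENNReal.ofReal (((1/2:ℝ)^(n+1) * r)⁻¹) * volume (A n)
          ≤ ENNReal.ofReal (((1/2:ℝ)^(n+1) * r)⁻¹) * volume (ball ξ ((1/2)^n * r)) :=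
            mul_le_mul_right (measure_mono diff_subset) _
        _ = ENNReal.ofReal (((1/2:ℝ)^(n+1) * r)⁻¹ * (π * ((1/2)^n * r)^2)) := by
            rw [vol_ball_C ξ _ (by positivity), ← ENNReal.ofReal_mul (by positivity)]
        _ = ENNReal.ofReal (2 * π * r * (1/2)^n) := by
            congr 1
            rw [pow_succ]
            field_simp
    refine (ENNReal.tsum_le_tsum hAn).trans ?_
    rw [← ENNReal.ofReal_tsum_of_nonneg (fun n => by positivity)
      (summable_geometric_two.mul_left (2 * π * r))]
    refine ENNReal.ofReal_le_ofReal ?_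
    rw [tsum_mul_left, tsum_geometric_two]
    ring_nf
    exact le_refl _
  have hsplit : ball c r ⊆ (ball c r \ ball ξ r) ∪ (ball ξ r \ {ξ} ∪ {ξ}) := by
    intro w hw
    by_cases h1 : w ∈ ball ξ r
    · by_cases h2 : w = ξ
      · exact Or.inr (Or.inr h2)
      · exact Or.inr (Or.inl ⟨h1, h2⟩)
    · exact Or.inl ⟨hw, h1⟩
  calc ∫⁻ w in ball c r, f w ∂volume
      ≤ ∫⁻ w in (ball c r \ ball ξ r) ∪ (ball ξ r \ {ξ} ∪ {ξ}), f w ∂volume :=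
        lintegral_mono_set hsplit
    _ ≤ ∫⁻ w in ball c r \ ball ξ r, f w ∂volume
        + (∫⁻ w in ball ξ r \ {ξ}, f w ∂volume + ∫⁻ w in ({ξ} : Set ℂ), f w ∂volume) :=
        (lintegral_union_le _ _ _).trans (add_le_add_right (lintegral_union_le _ _ _) _)
    _ ≤ ENNReal.ofReal (π * r) + (ENNReal.ofReal (4 * π * r) + 0) := by
        refine add_le_add houter (add_le_add hannuli ?_)
        rw [setLIntegral_measure_zero _ _ (measure_singleton ξ)]
    _ ≤ ENNReal.ofReal (5 * π * r) := by
        rw [add_zero, ← ENNReal.ofReal_add (by positivity) (by positivity)]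
        exact ENNReal.ofReal_le_ofReal (by ring_nf; exact le_refl _)

theorem stmt_15 (D : Set ℂ) (hDo : IsOpen D) (hDc : IsConnected D)
    (ζ : ℂ) (hζ : ζ ∈ frontier D)
    (hdens : Tendsto (fun r : ℝ => volume (D ∩ ball ζ r) / ENNReal.ofReal (π * r ^ 2))
      (𝓝[>] 0) (𝓝 1))
    (μ : Measure ℂ) [IsFiniteMeasure μ]
    (hsupp : ∃ K : Set ℂ, IsCompact K ∧ K ⊆ D ∪ {ζ} ∧ μ Kᶜ = 0)
    (hζμ : μ {ζ} = 0)
    (M : ℂ → ℝ≥0∞)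
    (hM : ∀ ξ : ℂ, M ξ = ∫⁻ w, ENNReal.ofReal (1 / ‖w - ξ‖) ∂μ)
    (Pset : ℝ → Set ℂ)
    (hPset : ∀ ε : ℝ, Pset ε = {w : ℂ | ENNReal.ofReal ε < ENNReal.ofReal (‖w - ζ‖) * M w}) :
    (∀ ε : ℝ, 0 < ε →
      Tendsto (fun r : ℝ => volume ((D ∩ ball ζ r) \ Pset ε) / ENNReal.ofReal (π * r ^ 2))
        (𝓝[>] 0) (𝓝 1)) ∧
    ∃ η : ℕ → ℂ, (∀ ν, η ν ∈ D) ∧ Tendsto η atTop (𝓝 ζ) ∧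
      ∀ ν, ENNReal.ofReal (‖ζ - η ν‖) * M (η ν) ≤ ENNReal.ofReal ((1 / 2 : ℝ) ^ ν) := by
  classical
  have hpair : Measurable fun p : ℂ × ℂ => ENNReal.ofReal (1 / ‖p.2 - p.1‖) := by
    have h : Continuous fun p : ℂ × ℂ => ‖p.2 - p.1‖ :=
      continuous_norm.comp (continuous_snd.sub continuous_fst)
    exact ENNReal.measurable_ofReal.comp (measurable_const.div h.measurable)
  -- the measure of small closed balls tends to `0`
  have hμδ : Tendsto (fun δ : ℝ => μ (closedBall ζ δ)) (𝓝[>] 0) (𝓝 0) := by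
    have h1 : Tendsto (fun δ : ℝ => μ (cthickening δ {ζ})) (𝓝 0) (𝓝 (μ {ζ})) :=
      tendsto_measure_cthickening_of_isClosed ⟨1, one_pos, measure_ne_top μ _⟩
        isClosed_singleton
    rw [hζμ] at h1
    refine (h1.mono_left nhdsWithin_le_nhds).congr' ?_
    filter_upwards [self_mem_nhdsWithin] with δ hδ
    rw [cthickening_singleton ζ (le_of_lt hδ)]
  -- Key lemma: the exceptional set has density 0
  have lemA : ∀ ε : ℝ, 0 < ε →
      Tendsto (fun r : ℝ => volume (Pset ε ∩ ball ζ r) / ENNReal.ofReal (π * r ^ 2))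
        (𝓝[>] 0) (𝓝 0) := by
    intro ε hε
    rw [ENNReal.tendsto_nhds_zero]
    intro ε' hε'
    -- choose δ with `ofReal (10/ε) * μ (closedBall ζ δ) < ε'`
    have hcomb : Tendsto (fun δ : ℝ => ENNReal.ofReal (10/ε) * μ (closedBall ζ δ))
        (𝓝[>] 0) (𝓝 0) := by
      have := ENNReal.Tendsto.const_mul hμδ (Or.inr ENNReal.ofReal_ne_top)
        (a := ENNReal.ofReal (10/ε))
      simpa using this
    obtain ⟨δ, hδlt, hδpos⟩ := ((hcomb.eventually (Iio_mem_nhds hε')).and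
      self_mem_nhdsWithin).exists
    set T := (μ univ).toReal with hT
    have hTnn : 0 ≤ T := ENNReal.toReal_nonneg
    set r₀ : ℝ := min (δ/2) (ε*δ/(4*(T+1))) with hr₀def
    have hr₀ : 0 < r₀ := lt_min (by positivity) (by positivity)
    filter_upwards [Ioo_mem_nhdsGT_of_mem (show (0:ℝ) ∈ Ico 0 r₀ from ⟨le_refl 0, hr₀⟩)]
      with r hr
    obtain ⟨hr0, hrr₀⟩ := hr
    have hrδ : r ≤ δ/2 := le_of_lt (lt_of_lt_of_le hrr₀ (min_le_left _ _))
    have hrT : r ≤ ε*δ/(4*(T+1)) := le_of_lt (lt_of_lt_of_le hrr₀ (min_le_right _ _))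
    set S : Set ℂ := closedBall ζ δ with hS
    set Mn : ℂ → ℝ≥0∞ :=
      fun w => ∫⁻ ξ, ENNReal.ofReal (1 / ‖ξ - w‖) ∂(μ.restrict S) with hMn
    have hMnmeas : Measurable Mn :=
      Measurable.lintegral_prod_right (f := fun w ξ => ENNReal.ofReal (1 / ‖ξ - w‖))
        hpair
    have hMsplit : ∀ w : ℂ, M w = Mn w +
        ∫⁻ ξ, ENNReal.ofReal (1 / ‖ξ - w‖) ∂(μ.restrict Sᶜ) := by
      intro w
      rw [hM w, hMn, ← lintegral_add_measure,
        Measure.restrict_add_restrict_compl (measurableSet_closedBall)]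
    -- far part bound
    have hfar : ∀ w ∈ ball ζ r,
        (∫⁻ ξ, ENNReal.ofReal (1 / ‖ξ - w‖) ∂(μ.restrict Sᶜ))
          ≤ ENNReal.ofReal (2*(T+1)/δ) := by
      intro w hw
      have h1 : (∫⁻ ξ in Sᶜ, ENNReal.ofReal (1 / ‖ξ - w‖) ∂μ)
          ≤ ∫⁻ _ in Sᶜ, ENNReal.ofReal (2/δ) ∂μ := by
        refine setLIntegral_mono' measurableSet_closedBall.compl fun ξ hξ => ?_
        refine ENNReal.ofReal_le_ofReal ?_
        have hd : δ < dist ξ ζ := by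
          simp only [hS, mem_compl_iff, mem_closedBall, not_le] at hξ
          exact hξ
        have hwζ : dist w ζ < r := mem_ball.1 hw
        have h2 : δ/2 ≤ dist ξ w := by
          have := dist_triangle ξ w ζ
          have h3 : dist ξ ζ ≤ dist ξ w + dist w ζ := this
          linarith
        rw [Complex.dist_eq] at h2
        have h4 : (1:ℝ)/(δ/2) = 2/δ := by field_simp
        rw [← h4]
        exact one_div_le_one_div_of_le (by positivity) h2
      refine h1.trans ?_
      rw [setLIntegral_const]
      calc ENNReal.ofReal (2/δ) * μ Sᶜ ≤ ENNReal.ofReal (2/δ) * μ univ :=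
            mul_le_mul_right (measure_mono (subset_univ _)) _
        _ = ENNReal.ofReal (2/δ) * ENNReal.ofReal T := by
            rw [hT, ENNReal.ofReal_toReal (measure_ne_top μ _)]
        _ = ENNReal.ofReal (2/δ * T) := (ENNReal.ofReal_mul (by positivity)).symm
        _ ≤ ENNReal.ofReal (2*(T+1)/δ) := ENNReal.ofReal_le_ofReal (by
            rw [div_mul_eq_mul_div, div_le_div_iff₀ (by positivity) (by positivity)]
            nlinarith)
    -- inclusion into a superlevel set of `Mn`
    have hincl : Pset ε ∩ ball ζ r ⊆ {w | ENNReal.ofReal (ε/(2*r)) ≤ Mn w} ∩ ball ζ r := by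
      rintro w ⟨hwP, hwb⟩
      refine ⟨?_, hwb⟩
      rw [hPset] at hwP
      have hwζ : ‖w - ζ‖ < r := by
        rw [← Complex.dist_eq]; exact mem_ball.1 hwb
      have hub : ENNReal.ofReal ε < ENNReal.ofReal r * Mn w + ENNReal.ofReal (ε/2) := by
        have h1 : ENNReal.ofReal (‖w - ζ‖) * M w
            ≤ ENNReal.ofReal r * Mn w + ENNReal.ofReal r * ENNReal.ofReal (2*(T+1)/δ) := by
          rw [hMsplit w, mul_add]
          exact add_le_add
            (mul_le_mul' (ENNReal.ofReal_le_ofReal hwζ.le) le_rfl)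
            (mul_le_mul' (ENNReal.ofReal_le_ofReal hwζ.le) (hfar w hwb))
        have h2 : ENNReal.ofReal r * ENNReal.ofReal (2*(T+1)/δ) ≤ ENNReal.ofReal (ε/2) := by
          rw [← ENNReal.ofReal_mul hr0.le]
          refine ENNReal.ofReal_le_ofReal ?_
          have h5 := mul_le_mul_of_nonneg_right hrT
            (by positivity : (0:ℝ) ≤ 2*(T+1)/δ)
          calc r * (2*(T+1)/δ) ≤ ε*δ/(4*(T+1)) * (2*(T+1)/δ) := h5
            _ = ε/2 := by field_simp; ring
        calc ENNReal.ofReal ε < ENNReal.ofReal (‖w - ζ‖) * M w := hwP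
          _ ≤ ENNReal.ofReal r * Mn w + ENNReal.ofReal r * ENNReal.ofReal (2*(T+1)/δ) := h1
          _ ≤ ENNReal.ofReal r * Mn w + ENNReal.ofReal (ε/2) := add_le_add_right h2 _
      rw [mem_setOf_eq]
      by_contra hcon
      push_neg at hcon
      have h3 : ENNReal.ofReal r * Mn w ≤ ENNReal.ofReal (ε/2) := by
        calc ENNReal.ofReal r * Mn w ≤ ENNReal.ofReal r * ENNReal.ofReal (ε/(2*r)) :=
              mul_le_mul_right hcon.le _
          _ = ENNReal.ofReal (r * (ε/(2*r))) := (ENNReal.ofReal_mul hr0.le).symm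
          _ = ENNReal.ofReal (ε/2) := by congr 1; field_simp
      have h4 : ENNReal.ofReal ε < ENNReal.ofReal ε := by
        calc ENNReal.ofReal ε < ENNReal.ofReal r * Mn w + ENNReal.ofReal (ε/2) := hub
          _ ≤ ENNReal.ofReal (ε/2) + ENNReal.ofReal (ε/2) := add_le_add_left h3 _
          _ = ENNReal.ofReal ε := by
              rw [← ENNReal.ofReal_add (by positivity) (by positivity)]
              congr 1; ring
      exact absurd h4 (lt_irrefl _)
    -- Chebyshev + Fubini
    have hc0 : ENNReal.ofReal (ε/(2*r)) ≠ 0 := by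
      simp only [ne_eq, ENNReal.ofReal_eq_zero, not_le]
      positivity
    have hcheb : volume (Pset ε ∩ ball ζ r)
        ≤ (ENNReal.ofReal (5*π*r) * μ S) / ENNReal.ofReal (ε/(2*r)) := by
      have h1 : volume (Pset ε ∩ ball ζ r)
          ≤ (volume.restrict (ball ζ r)) {w | ENNReal.ofReal (ε/(2*r)) ≤ Mn w} := by
        rw [Measure.restrict_apply (measurableSet_le measurable_const hMnmeas)]
        exact measure_mono hincl
      have h2 := meas_ge_le_lintegral_div (μ := volume.restrict (ball ζ r))
        hMnmeas.aemeasurable hc0 ENNReal.ofReal_ne_top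
      have h3 : (∫⁻ w, Mn w ∂(volume.restrict (ball ζ r)))
          ≤ ENNReal.ofReal (5*π*r) * μ S := by
        have hswap : (∫⁻ w, Mn w ∂(volume.restrict (ball ζ r)))
            = ∫⁻ ξ, (∫⁻ w in ball ζ r, ENNReal.ofReal (1 / ‖ξ - w‖) ∂volume)
                ∂(μ.restrict S) :=
          lintegral_lintegral_swap hpair.aemeasurable
        rw [hswap]
        have h4 : ∀ ξ : ℂ,
            (∫⁻ w in ball ζ r, ENNReal.ofReal (1 / ‖ξ - w‖) ∂volume)
              ≤ ENNReal.ofReal (5*π*r) := by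
          intro ξ
          have := ball_pot_bound ξ ζ r hr0
          refine le_trans (le_of_eq ?_) this
          refine lintegral_congr fun w => ?_
          rw [norm_sub_rev]
        calc (∫⁻ ξ, (∫⁻ w in ball ζ r, ENNReal.ofReal (1 / ‖ξ - w‖) ∂volume)
                ∂(μ.restrict S))
            ≤ ∫⁻ _, ENNReal.ofReal (5*π*r) ∂(μ.restrict S) := lintegral_mono h4
          _ = ENNReal.ofReal (5*π*r) * μ S := by
              rw [lintegral_const, Measure.restrict_apply_univ]
      exact h1.trans (h2.trans (ENNReal.div_le_div_right h3 _))
    -- final arithmetic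
    have hfinal : volume (Pset ε ∩ ball ζ r) / ENNReal.ofReal (π * r ^ 2)
        ≤ ENNReal.ofReal (10/ε) * μ (closedBall ζ δ) := by
      refine (ENNReal.div_le_div_right hcheb _).trans ?_
      have hbne : ENNReal.ofReal (ε/(2*r)) ≠ 0 := hc0
      have hcne : ENNReal.ofReal (π * r ^ 2) ≠ 0 := by
        simp only [ne_eq, ENNReal.ofReal_eq_zero, not_le]
        positivity
      rw [ENNReal.div_le_iff hcne ENNReal.ofReal_ne_top,
        ENNReal.div_le_iff hbne ENNReal.ofReal_ne_top]
      refine le_of_eq ?_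
      have hre : ENNReal.ofReal (10/ε) * μ S * ENNReal.ofReal (π * r ^ 2)
            * ENNReal.ofReal (ε/(2*r))
          = ENNReal.ofReal (10/ε) * ENNReal.ofReal (π * r ^ 2)
            * ENNReal.ofReal (ε/(2*r)) * μ S := by ring
      rw [hre, ← ENNReal.ofReal_mul (by positivity), ← ENNReal.ofReal_mul (by positivity)]
      congr 2
      field_simp
      ring
    exact le_of_lt (lt_of_le_of_lt hfinal hδlt)
  have part1 : ∀ ε : ℝ, 0 < ε →
      Tendsto (fun r : ℝ => volume ((D ∩ ball ζ r) \ Pset ε) / ENNReal.ofReal (π * r ^ 2))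
        (𝓝[>] 0) (𝓝 1) := by
    intro ε hε
    have hub : ∀ r : ℝ, volume ((D ∩ ball ζ r) \ Pset ε) / ENNReal.ofReal (π * r ^ 2)
        ≤ volume (D ∩ ball ζ r) / ENNReal.ofReal (π * r ^ 2) := fun r =>
      ENNReal.div_le_div_right (measure_mono diff_subset) _
    have hlb : ∀ r : ℝ,
        volume (D ∩ ball ζ r) / ENNReal.ofReal (π * r ^ 2)
          - volume (Pset ε ∩ ball ζ r) / ENNReal.ofReal (π * r ^ 2)
        ≤ volume ((D ∩ ball ζ r) \ Pset ε) / ENNReal.ofReal (π * r ^ 2) := by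
      intro r
      rw [tsub_le_iff_right]
      have hsub : D ∩ ball ζ r ⊆ ((D ∩ ball ζ r) \ Pset ε) ∪ (Pset ε ∩ ball ζ r) := by
        intro w hw
        by_cases h : w ∈ Pset ε
        · exact Or.inr ⟨h, hw.2⟩
        · exact Or.inl ⟨hw, h⟩
      calc volume (D ∩ ball ζ r) / ENNReal.ofReal (π * r ^ 2)
          ≤ (volume ((D ∩ ball ζ r) \ Pset ε) + volume (Pset ε ∩ ball ζ r))
              / ENNReal.ofReal (π * r ^ 2) :=
            ENNReal.div_le_div_right ((measure_mono hsub).trans (measure_union_le _ _)) _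
        _ = _ := (ENNReal.div_add_div_same).symm
    have hlow : Tendsto (fun r : ℝ =>
        volume (D ∩ ball ζ r) / ENNReal.ofReal (π * r ^ 2)
          - volume (Pset ε ∩ ball ζ r) / ENNReal.ofReal (π * r ^ 2)) (𝓝[>] 0) (𝓝 1) := by
      have := ENNReal.Tendsto.sub hdens (lemA ε hε) (Or.inl ENNReal.one_ne_top)
      simpa using this
    exact tendsto_of_tendsto_of_tendsto_of_le_of_le hlow hdens hlb hub
  refine ⟨part1, ?_⟩
  have hex : ∀ ν : ℕ, ∃ w : ℂ, w ∈ D ∧ dist w ζ < (1/2 : ℝ)^ν ∧ w ∉ Pset ((1/2 : ℝ)^ν) := by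
    intro ν
    have hp : (0:ℝ) < (1/2)^ν := by positivity
    have h1 : ∀ᶠ r in 𝓝[>] (0:ℝ),
        (1/2 : ℝ≥0∞) < volume ((D ∩ ball ζ r) \ Pset ((1/2:ℝ)^ν))
          / ENNReal.ofReal (π * r ^ 2) :=
      (part1 _ hp).eventually (lt_mem_nhds (by norm_num : (1/2 : ℝ≥0∞) < 1))
    obtain ⟨r, hr1, hr2⟩ := (h1.and (Ioo_mem_nhdsGT_of_mem ⟨le_refl (0:ℝ), hp⟩)).exists
    have hne : volume ((D ∩ ball ζ r) \ Pset ((1/2:ℝ)^ν)) ≠ 0 := by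
      intro h0
      rw [h0, ENNReal.zero_div] at hr1
      exact absurd hr1 (by simp)
    obtain ⟨w, hw⟩ := nonempty_of_measure_ne_zero hne
    exact ⟨w, hw.1.1, lt_of_lt_of_le (mem_ball.1 hw.1.2) hr2.2.le, hw.2⟩
  choose η h1 h2 h3 using hex
  refine ⟨η, h1, ?_, ?_⟩
  · rw [tendsto_iff_dist_tendsto_zero]
    exact squeeze_zero (fun ν => dist_nonneg) (fun ν => (h2 ν).le)
      (tendsto_pow_atTop_nhds_zero_of_lt_one (by norm_num) (by norm_num))
  · intro ν
    have hν := h3 ν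
    rw [hPset, mem_setOf_eq, not_lt] at hν
    calc ENNReal.ofReal (‖ζ - η ν‖) * M (η ν)
        = ENNReal.ofReal (‖η ν - ζ‖) * M (η ν) := by rw [norm_sub_rev]
      _ ≤ ENNReal.ofReal ((1/2:ℝ)^ν) := hν
end

section
/- Every locally compact, σ-compact Hausdorff topological space X has the following property: for any positive linear functional Λ : C(X) → ℝ on the space of continuous real-valued functions, there exists a compact set K ⊆ X such that Λ(φ) = 0 for every φ ∈ C(X) vanishing identically on K. -/
theorem stmt_18 {X : Type*} [TopologicalSpace X] [T2Space X] [LocallyCompactSpace X]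
    [SigmaCompactSpace X]
    (Λ : C(X, ℝ) →ₗ[ℝ] ℝ) (hpos : ∀ φ : C(X, ℝ), (∀ t, 0 ≤ φ t) → 0 ≤ Λ φ) :
    ∃ K : Set X, IsCompact K ∧ ∀ φ : C(X, ℝ), (∀ x ∈ K, φ x = 0) → Λ φ = 0 := by
  by_contra h
  push_neg at h
  set E : CompactExhaustion X := CompactExhaustion.choice X with hE
  have key : ∀ n : ℕ, ∃ g : C(X, ℝ), (∀ t, 0 ≤ g t) ∧ (∀ x ∈ E n, g x = 0) ∧ Λ g = 1 := by
    intro n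
    obtain ⟨φ, hφ0, hφΛ⟩ := h (E n) (E.isCompact n)
    have h1 : 0 ≤ Λ (|φ| - φ) := hpos _ (by
      intro t
      simp only [ContinuousMap.sub_apply, ContinuousMap.abs_apply]
      linarith [abs_nonneg (φ t), le_abs_self (φ t)])
    have h2 : 0 ≤ Λ (|φ| + φ) := hpos _ (by
      intro t
      simp only [ContinuousMap.add_apply, ContinuousMap.abs_apply]
      linarith [neg_abs_le (φ t)])
    rw [map_sub] at h1
    rw [map_add] at h2
    have habs : 0 < Λ |φ| := by
      rcases lt_or_ge 0 (Λ φ) with hc | hc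
      · linarith
      · rcases hc.lt_or_eq with hc | hc
        · linarith
        · exact absurd hc hφΛ
    refine ⟨(Λ |φ|)⁻¹ • |φ|, ?_, ?_, ?_⟩
    · intro t
      simp only [ContinuousMap.smul_apply, ContinuousMap.abs_apply, smul_eq_mul]
      positivity
    · intro x hx
      simp [ContinuousMap.abs_apply, hφ0 x hx]
    · rw [map_smul, smul_eq_mul, inv_mul_cancel₀ habs.ne']
  choose g hg0 hgE hgΛ using key
  have hfin : ∀ x : X, ∀ n ∉ Finset.range (E.find x + 1), g n x = 0 := by
    intro x n hn
    have hle : E.find x ≤ n := by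
      simp only [Finset.mem_range, not_lt] at hn; omega
    exact hgE n x (E.subset hle (E.mem_find x))
  set F : X → ℝ := fun x => ∑' n, g n x with hF
  have hFcont : Continuous F := by
    rw [continuous_iff_continuousAt]
    intro x
    set m := E.find x + 1 with hm
    have hx : x ∈ interior (E m) := E.subset_interior_succ _ (E.mem_find x)
    have heq : ∀ y ∈ interior (E m), F y = ∑ n ∈ Finset.range m, g n y := by
      intro y hy
      refine tsum_eq_sum (fun n hn => hgE n y (E.subset ?_ (interior_subset hy)))
      simp only [Finset.mem_range, not_lt] at hn; exact hn
    have hc : ContinuousAt (fun y => ∑ n ∈ Finset.range m, g n y) x := by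
      exact (continuous_finset_sum _ (fun n _ => (g n).continuous)).continuousAt
    refine hc.congr ?_
    filter_upwards [isOpen_interior.mem_nhds hx] with y hy
    exact (heq y hy).symm
  set Φ : C(X, ℝ) := ⟨F, hFcont⟩ with hΦ
  have hsummable : ∀ x : X, Summable fun n => g n x := fun x =>
    summable_of_ne_finset_zero (hfin x)
  have hbound : ∀ N : ℕ, (N : ℝ) ≤ Λ Φ := by
    intro N
    have hge : ∀ x : X, ∑ n ∈ Finset.range N, g n x ≤ F x := fun x =>
      Summable.sum_le_tsum (Finset.range N) (fun n _ => hg0 n x) (hsummable x)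
    have h1 : 0 ≤ Λ (Φ - ∑ n ∈ Finset.range N, g n) := by
      refine hpos _ (fun t => ?_)
      simp only [ContinuousMap.sub_apply, ContinuousMap.coe_sum, Finset.sum_apply]
      have := hge t
      simp only [hΦ, ContinuousMap.coe_mk] at *
      linarith
    rw [map_sub, map_sum] at h1
    simp only [hgΛ, Finset.sum_const, Finset.card_range, nsmul_eq_mul, mul_one] at h1
    linarith
  obtain ⟨N, hN⟩ := exists_nat_gt (Λ Φ)
  linarith [hbound N]
end
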